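/- Let M be a binary matroid with ground set S, let X be a nonempty independent set in M, and let M^X be the Γ-extension of M with ground set S ∪ Γ. Then Γ contains a cocircuit of M^X. Consequently, if M^X is k-connected (k ≥ 2) and M^X has at least 2(k−1) elements, then |X| ≥ k. -/

import Mathlib

open Set
open scoped Classical

/-- A circuit of a matroid: a minimal dependent set. -/
def MatroidCircuit {α : Type*} (M : Matroid α) (C : Set α) : Prop :=
  M.Dep C ∧ ∀ D ⊂ C, ¬ M.Dep D

/-- A cocircuit of a matroid: a circuit of the dual matroid. -/
def MatroidCocircuit {α : Type*} (M : Matroid α) (C : Set α) : Prop :=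
  MatroidCircuit M✶ C

/-- The rank of a set in a matroid, as an extended natural number: the supremum of the
cardinalities of independent subsets of the set. -/
noncomputable def matroidERk {α : Type*} (M : Matroid α) (A : Set α) : ℕ∞ :=
  ⨆ I : {I : Set α // M.Indep I ∧ I ⊆ A}, (I : Set α).encard

/-- The rank of a matroid. -/
noncomputable def matroidERank {α : Type*} (M : Matroid α) : ℕ∞ :=
  matroidERk M M.E

/-- Deletion of a set from a matroid: the restriction to the complement. -/
def matroidDelete {α : Type*} (M : Matroid α) (Y : Set α) : Matroid α :=
  M.restrict (M.E \ Y)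

/-- A `k`-separation of a matroid `M`: a partition of the ground set into disjoint sets `A`, `B`
with `min (|A|, |B|) ≥ k` and `r(A) + r(B) - r(M) ≤ k - 1`. -/
def KSeparation {α : Type*} (M : Matroid α) (k : ℕ) (A B : Set α) : Prop :=
  Disjoint A B ∧ A ∪ B = M.E ∧ (k : ℕ∞) ≤ A.encard ∧ (k : ℕ∞) ≤ B.encard ∧
    matroidERk M A + matroidERk M B ≤ matroidERank M + ((k : ℕ∞) - 1)

/-- For `k ≥ 2`, a matroid is `k`-connected if it has no `(k-1)`-separation. -/
def KConnected {α : Type*} (M : Matroid α) (k : ℕ) : Prop :=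
  ∀ A B : Set α, ¬ KSeparation M (k - 1) A B

/-- The relation `e ~ f` iff `e = f` or some circuit contains both `e` and `f`. -/
def ConnRel {α : Type*} (M : Matroid α) (e f : α) : Prop :=
  e = f ∨ ∃ C, MatroidCircuit M C ∧ e ∈ C ∧ f ∈ C

/-- A component of a matroid: an equivalence class of the relation `ConnRel` on the
ground set. -/
def MatroidComponent {α : Type*} (M : Matroid α) (D : Set α) : Prop :=
  ∃ e ∈ M.E, D = {f ∈ M.E | ConnRel M e f}

/-- A matroid is connected if it has exactly one component. -/
def MatroidConnected {α : Type*} (M : Matroid α) : Prop :=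
  ∃! D : Set α, MatroidComponent M D

/-- `M` is the vector matroid over GF(2) of the matrix with column set `S` whose column at
`e ∈ S` is `A e`: a set is independent iff it is a subset of `S` whose columns are linearly
independent over GF(2). -/
def IsBinaryRep {α ρ : Type*} (M : Matroid α) (S : Set α) (A : α → ρ → ZMod 2) : Prop :=
  M.E = S ∧ ∀ I : Set α, M.Indep I ↔ I ⊆ S ∧ LinearIndependent (ZMod 2) (fun e : I => A e.1)

/-- The columns of the matrix `A^X` of the Γ-extension: for each index `i`, the new column
labelled `g i` agrees with the column of `x i` in the old rows and has entry `1` in the new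
row (indexed by `none`), while every old column keeps its entries in the old rows and has
entry `0` in the new row. -/
noncomputable def gammaCols {α ρ ι : Type*} (A : α → ρ → ZMod 2) (x g : ι → α) :
    α → Option ρ → ZMod 2 := fun e o =>
  if h : ∃ i, g i = e then o.elim 1 (fun r => A (x h.choose) r)
  else o.elim 0 (fun r => A e r)

section Aux

variable {α ρ ι : Type*}

/-- The linear map extending a vector by a `0` entry at the `none` coordinate. -/
noncomputable def extMap (ρ : Type*) : (ρ → ZMod 2) →ₗ[ZMod 2] (Option ρ → ZMod 2) where
  toFun f := fun o => o.elim 0 f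
  map_add' f h := by funext o; cases o <;> simp
  map_smul' c f := by funext o; cases o <;> simp

/-- The vector with a `1` at the `none` coordinate and `0` elsewhere. -/
def deltaV (ρ : Type*) : Option ρ → ZMod 2 := fun o => o.elim 1 (fun _ => 0)

lemma extMap_eq_zero {f : ρ → ZMod 2} (h : extMap ρ f = 0) : f = 0 :=
  funext fun r => congrFun h (some r)

lemma li_iff {W : Type*} [AddCommGroup W] [Module (ZMod 2) W] (v : α → W) (s : Set α) :
    LinearIndependent (ZMod 2) (fun e : s => v e.1) ↔
      ∀ l : α →₀ ZMod 2, ↑l.support ⊆ s →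
        Finsupp.linearCombination (ZMod 2) v l = 0 → l = 0 := by
  rw [show (fun e : s => v e.1) = v ∘ (↑) from rfl, linearIndependent_comp_subtype_iff, linearIndepOn_iff]
  simp [Finsupp.mem_supported]

lemma gammaCols_of_mem (A : α → ρ → ZMod 2) (x g : ι → α)
    (hdisj : Disjoint S (Set.range g)) {e : α} (he : e ∈ S) :
    gammaCols A x g e = extMap ρ (A e) := by
  have h : ¬∃ i, g i = e := fun ⟨i, hi⟩ =>
    Set.disjoint_left.mp hdisj he ⟨i, hi⟩
  funext o
  unfold gammaCols
  rw [dif_neg h]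
  cases o <;> rfl

lemma gammaCols_g (A : α → ρ → ZMod 2) (x : ι → α) {g : ι → α}
    (hginj : Function.Injective g) (i : ι) :
    gammaCols A x g (g i) = extMap ρ (A (x i)) + deltaV ρ := by
  have h : ∃ i', g i' = g i := ⟨i, rfl⟩
  have hc : h.choose = i := hginj h.choose_spec
  funext o
  unfold gammaCols
  rw [dif_pos h, hc]
  cases o with
  | none => simp [extMap, deltaV]
  | some r => simp [extMap, deltaV]

lemma lc_gammaCols {S : Set α} (A : α → ρ → ZMod 2) (x g : ι → α)
    (hdisj : Disjoint S (Set.range g)) {l : α →₀ ZMod 2} (hl : ↑l.support ⊆ S) :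
    Finsupp.linearCombination (ZMod 2) (gammaCols A x g) l
      = extMap ρ (Finsupp.linearCombination (ZMod 2) A l) := by
  rw [Finsupp.apply_linearCombination, Finsupp.linearCombination_apply,
    Finsupp.linearCombination_apply]
  apply Finsupp.sum_congr
  intro e he
  rw [gammaCols_of_mem A x g hdisj (hl he)]
  rfl

lemma indep_insert_g {S : Set α} (A : α → ρ → ZMod 2) (x : ι → α) {g : ι → α}
    (hdisj : Disjoint S (Set.range g)) (hginj : Function.Injective g)
    {B : Set α} (hB : B ⊆ S)
    (hli : LinearIndependent (ZMod 2) (fun e : B => gammaCols A x g e.1)) (j : ι) :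
    LinearIndependent (ZMod 2)
      (fun e : (insert (g j) B : Set α) => gammaCols A x g e.1) := by
  rw [li_iff] at hli ⊢
  intro l hsupp hl0
  have hval : ∀ e ∈ B, gammaCols A x g e none = 0 := by
    intro e he
    rw [gammaCols_of_mem A x g hdisj (hB he)]
    rfl
  have hgj : l (g j) = 0 := by
    have h := Finsupp.apply_linearCombination (R := ZMod 2)
      (LinearMap.proj (R := ZMod 2) (φ := fun _ : Option ρ => ZMod 2) none)
      (gammaCols A x g) l
    rw [hl0, map_zero] at h
    have h2 : l.sum (fun e c => c • gammaCols A x g e none) = 0 := by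
      rw [← Finsupp.linearCombination_apply]
      exact h.symm
    rw [Finsupp.sum_eq_single (g j) ?_ (by simp)] at h2
    · have : gammaCols A x g (g j) none = 1 := by
        rw [gammaCols_g A x hginj j]; rfl
      rwa [this, smul_eq_mul, mul_one] at h2
    · intro b hb hbne
      have hbB : b ∈ B := by
        rcases hsupp (Finsupp.mem_support_iff.mpr hb) with h' | h'
        · exact absurd h' hbne
        · exact h'
      rw [hval b hbB, smul_zero]
  have hsupp' : ↑l.support ⊆ B := by
    intro e he
    rcases hsupp he with h' | h'
    · exact absurd (h' ▸ Finsupp.mem_support_iff.mp he) (by simp [hgj])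
    · exact h'
  exact hli l hsupp' hl0

lemma indep_transfer {S : Set α} (A : α → ρ → ZMod 2) (x g : ι → α)
    (hdisj : Disjoint S (Set.range g)) {B : Set α} (hB : B ⊆ S) :
    LinearIndependent (ZMod 2) (fun e : B => A e.1) ↔
      LinearIndependent (ZMod 2) (fun e : B => gammaCols A x g e.1) := by
  rw [li_iff, li_iff]
  constructor
  · intro h l hs h0
    apply h l hs
    rw [lc_gammaCols A x g hdisj (hs.trans hB)] at h0
    exact extMap_eq_zero h0
  · intro h l hs h0
    apply h l hs
    rw [lc_gammaCols A x g hdisj (hs.trans hB), h0, map_zero]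

lemma zmod2_self_add (v : Option ρ → ZMod 2) : v + v = 0 := by
  funext o
  have : ∀ c : ZMod 2, c + c = 0 := by decide
  exact this (v o)

lemma exists_rep {S : Set α} {M : Matroid α} {A : α → ρ → ZMod 2}
    (hM : IsBinaryRep M S A) {B0 : Set α} (hB0 : M.IsBase B0) {a : α} (ha : a ∈ S) :
    ∃ l : α →₀ ZMod 2, ↑l.support ⊆ B0 ∧
      Finsupp.linearCombination (ZMod 2) A l = A a := by
  have hB0S : B0 ⊆ S := hM.1 ▸ hB0.subset_ground
  by_cases hmem : a ∈ B0
  · refine ⟨Finsupp.single a 1, ?_, ?_⟩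
    · intro e he
      have : e = a := by
        by_contra hne
        exact (Finsupp.mem_support_iff.mp he) (Finsupp.single_eq_of_ne' (Ne.symm hne))
      exact this ▸ hmem
    · rw [Finsupp.linearCombination_single, one_smul]
  · have hdep : M.Dep (insert a B0) := hB0.insert_dep ⟨hM.1 ▸ ha, hmem⟩
    have hBli : LinearIndependent (ZMod 2) (fun e : B0 => A e.1) :=
      ((hM.2 B0).mp hB0.indep).2
    have hnli : ¬ LinearIndependent (ZMod 2)
        (fun e : (insert a B0 : Set α) => A e.1) := by
      intro hli
      exact hdep.not_indep ((hM.2 _).mpr ⟨insert_subset ha hB0S, hli⟩)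
    rw [li_iff] at hnli
    push_neg at hnli
    obtain ⟨f, hfs, hf0, hfne⟩ := hnli
    have hfa : f a ≠ 0 := by
      intro h
      apply hfne
      have hsub : ↑f.support ⊆ B0 := by
        intro e he
        rcases hfs he with h' | h'
        · exact absurd (h' ▸ Finsupp.mem_support_iff.mp he) (by simp [h])
        · exact h'
      exact (li_iff A B0).mp hBli f hsub hf0
    have hfa1 : f a = 1 := by
      have : ∀ c : ZMod 2, c ≠ 0 → c = 1 := by decide
      exact this _ hfa
    refine ⟨f + Finsupp.single a 1, ?_, ?_⟩
    · intro e he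
      have he' : ((f + Finsupp.single a 1 : α →₀ ZMod 2)) e ≠ 0 := Finsupp.mem_support_iff.mp he
      by_cases hea : e = a
      · subst hea
        rw [Finsupp.add_apply, Finsupp.single_eq_same, hfa1] at he'
        exact absurd (by decide : (1 : ZMod 2) + 1 = 0) he'
      · rw [Finsupp.add_apply, Finsupp.single_eq_of_ne' (Ne.symm hea), add_zero] at he'
        rcases hfs (Finsupp.mem_support_iff.mpr he') with h' | h'
        · exact absurd h' hea
        · exact h'
    · rw [map_add, hf0, zero_add, Finsupp.linearCombination_single, one_smul]

lemma base_insert_g [Nonempty ι] {S : Set α} {M MX : Matroid α} {A : α → ρ → ZMod 2}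
    {x g : ι → α}
    (hginj : Function.Injective g) (hxS : Set.range x ⊆ S)
    (hdisj : Disjoint S (Set.range g))
    (hM : IsBinaryRep M S A) (hMX : IsBinaryRep MX (S ∪ Set.range g) (gammaCols A x g))
    {B0 : Set α} (hB0 : M.IsBase B0) (j : ι) :
    MX.IsBase (insert (g j) B0) := by
  have hB0S : B0 ⊆ S := hM.1 ▸ hB0.subset_ground
  have hB0G : LinearIndependent (ZMod 2) (fun e : B0 => gammaCols A x g e.1) :=
    (indep_transfer A x g hdisj hB0S).mp ((hM.2 B0).mp hB0.indep).2
  have hsubE : insert (g j) B0 ⊆ S ∪ Set.range g :=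
    insert_subset (Or.inr ⟨j, rfl⟩) (hB0S.trans subset_union_left)
  have hind : MX.Indep (insert (g j) B0) :=
    (hMX.2 _).mpr ⟨hsubE, indep_insert_g A x hdisj hginj hB0S hB0G j⟩
  apply hind.isBase_of_forall_insert
  intro e he hIndep
  have heE := he.1
  have heB := he.2
  rw [hMX.1] at heE
  have key : ∃ l : α →₀ ZMod 2, ↑l.support ⊆ insert e (insert (g j) B0) ∧
      Finsupp.linearCombination (ZMod 2) (gammaCols A x g) l = 0 ∧ l ≠ 0 := by
    rcases heE with heS | ⟨i, rfl⟩
    · obtain ⟨l, hls, hlA⟩ := exists_rep hM hB0 heS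
      refine ⟨l + Finsupp.single e 1, ?_, ?_, ?_⟩
      · intro a ha
        have ha' : ((l + Finsupp.single e 1 : α →₀ ZMod 2)) a ≠ 0 := Finsupp.mem_support_iff.mp ha
        by_cases hae : a = e
        · exact hae ▸ mem_insert _ _
        · rw [Finsupp.add_apply, Finsupp.single_eq_of_ne' (Ne.symm hae), add_zero] at ha'
          exact Or.inr (Or.inr (hls (Finsupp.mem_support_iff.mpr ha')))
      · rw [map_add, lc_gammaCols A x g hdisj (hls.trans hB0S), hlA,
          Finsupp.linearCombination_single, one_smul, gammaCols_of_mem A x g hdisj heS]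
        exact zmod2_self_add _
      · intro h0
        have : ((l + Finsupp.single e 1 : α →₀ ZMod 2)) e = 0 := by rw [h0]; rfl
        have hle : l e = 0 := Finsupp.notMem_support_iff.mp
          (fun hmem => heB (Or.inr (hls hmem)))
        rw [Finsupp.add_apply, Finsupp.single_eq_same, hle, zero_add] at this
        exact one_ne_zero this
    · obtain ⟨li, hlis, hliA⟩ := exists_rep hM hB0 (hxS ⟨i, rfl⟩)
      obtain ⟨lj, hljs, hljA⟩ := exists_rep hM hB0 (hxS ⟨j, rfl⟩)
      have hgij : g i ≠ g j := fun h => heB (h ▸ mem_insert _ _)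
      have hgiS : g i ∉ S := Set.disjoint_right.mp hdisj ⟨i, rfl⟩
      have hgjS : g j ∉ S := Set.disjoint_right.mp hdisj ⟨j, rfl⟩
      refine ⟨Finsupp.single (g i) 1 + Finsupp.single (g j) 1 + li + lj, ?_, ?_, ?_⟩
      · intro a ha
        have ha' : ((Finsupp.single (g i) 1 + Finsupp.single (g j) 1 + li + lj : α →₀ ZMod 2)) a ≠ 0 :=
          Finsupp.mem_support_iff.mp ha
        by_cases h1 : a = g i
        · exact h1 ▸ mem_insert _ _
        by_cases h2 : a = g j
        · exact Or.inr (h2 ▸ mem_insert _ _)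
        by_cases h3 : a ∈ li.support
        · exact Or.inr (Or.inr (hlis h3))
        by_cases h4 : a ∈ lj.support
        · exact Or.inr (Or.inr (hljs h4))
        exfalso
        apply ha'
        rw [Finsupp.add_apply, Finsupp.add_apply, Finsupp.add_apply,
          Finsupp.single_eq_of_ne' (Ne.symm h1), Finsupp.single_eq_of_ne' (Ne.symm h2),
          Finsupp.notMem_support_iff.mp h3, Finsupp.notMem_support_iff.mp h4]
        rfl
      · rw [map_add, map_add, map_add, Finsupp.linearCombination_single, one_smul,
          Finsupp.linearCombination_single, one_smul,
          lc_gammaCols A x g hdisj (hlis.trans hB0S),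
          lc_gammaCols A x g hdisj (hljs.trans hB0S), hliA, hljA,
          gammaCols_g A x hginj i, gammaCols_g A x hginj j]
        have hkey : ∀ u v w : Option ρ → ZMod 2, (u + w + (v + w) + u) + v = 0 := by
          intro u v w
          funext o
          have : ∀ a b c : ZMod 2, (a + c + (b + c) + a) + b = 0 := by decide
          exact this (u o) (v o) (w o)
        exact hkey _ _ _
      · intro h0
        have hvi : li (g i) = 0 := Finsupp.notMem_support_iff.mp
          (fun hmem => hgiS (hB0S (hlis hmem)))
        have hvj : lj (g i) = 0 := Finsupp.notMem_support_iff.mp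
          (fun hmem => hgiS (hB0S (hljs hmem)))
        have : ((Finsupp.single (g i) 1 + Finsupp.single (g j) 1 + li + lj : α →₀ ZMod 2)) (g i) = 0 := by
          rw [h0]; rfl
        rw [Finsupp.add_apply, Finsupp.add_apply, Finsupp.add_apply,
          Finsupp.single_eq_same, Finsupp.single_eq_of_ne' (Ne.symm hgij),
          hvi, hvj, add_zero, add_zero, add_zero] at this
        exact one_ne_zero this
  obtain ⟨l, h1, h2, h3⟩ := key
  exact h3 ((li_iff (gammaCols A x g) _).mp ((hMX.2 _).mp hIndep).2 l h1 h2)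

lemma erk_le_encard {M : Matroid α} {A : Set α} : matroidERk M A ≤ A.encard :=
  iSup_le fun I => encard_mono I.2.2

lemma erk_mono {M : Matroid α} {A B : Set α} (h : A ⊆ B) :
    matroidERk M A ≤ matroidERk M B :=
  iSup_le fun I => le_iSup_of_le ⟨I.1, I.2.1, I.2.2.trans h⟩ le_rfl

lemma encard_le_erk {M : Matroid α} {I A : Set α} (hI : M.Indep I) (hIA : I ⊆ A) :
    I.encard ≤ matroidERk M A :=
  le_iSup_of_le (⟨I, hI, hIA⟩ : {I : Set α // M.Indep I ∧ I ⊆ A}) le_rfl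

end Aux

/-- `Γ = range g` contains a cocircuit of the Γ-extension `M^X`; consequently, if `M^X` is
`k`-connected (`k ≥ 2`) and has at least `2(k-1)` elements, then `|X| ≥ k`. -/
theorem stmt_14 {α ρ ι : Type*} [Fintype ι] [Nonempty ι]
    (M MX : Matroid α) (S : Set α) (A : α → ρ → ZMod 2) (x g : ι → α)
    (hxinj : Function.Injective x) (hginj : Function.Injective g)
    (hxS : Set.range x ⊆ S) (hdisj : Disjoint S (Set.range g))
    (hXindep : M.Indep (Set.range x))
    (hM : IsBinaryRep M S A)
    (hMX : IsBinaryRep MX (S ∪ Set.range g) (gammaCols A x g)) :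
    (∃ C : Set α, C ⊆ Set.range g ∧ MatroidCocircuit MX C) ∧
      (∀ k : ℕ, 2 ≤ k → KConnected MX k →
        ((2 * (k - 1) : ℕ) : ℕ∞) ≤ (S ∪ Set.range g).encard → k ≤ Fintype.card ι) := by
  have hGE : Set.range g ⊆ MX.E := hMX.1 ▸ subset_union_right
  obtain ⟨B0, hB0⟩ := M.exists_isBase
  -- every basis of `MX` meets `range g`
  have hmeets : ∀ B : Set α, MX.IsBase B → ¬ Disjoint (Set.range g) B := by
    intro B hB hdisjB
    have hBS : B ⊆ S := by
      intro b hb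
      rcases (hMX.1 ▸ hB.subset_ground) hb with h | h
      · exact h
      · exact absurd hb (Set.disjoint_left.mp hdisjB h)
    obtain ⟨j⟩ := ‹Nonempty ι›
    have hBG : LinearIndependent (ZMod 2) (fun e : B => gammaCols A x g e.1) :=
      ((hMX.2 B).mp hB.indep).2
    have hins : MX.Indep (insert (g j) B) :=
      (hMX.2 _).mpr ⟨insert_subset (hMX.1 ▸ hGE ⟨j, rfl⟩)
        (hB.subset_ground.trans_eq (hMX.1)), indep_insert_g A x hdisj hginj hBS hBG j⟩
    exact (hB.insert_dep ⟨hGE ⟨j, rfl⟩,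
      fun h => Set.disjoint_left.mp hdisjB ⟨j, rfl⟩ h⟩).not_indep hins
  have hcocirc : MatroidCocircuit MX (Set.range g) := by
    constructor
    · refine ⟨?_, by rwa [Matroid.dual_ground]⟩
      intro h
      obtain ⟨-, B, hB, hdisjB⟩ := Matroid.dual_indep_iff_exists'.mp h
      exact hmeets B hB hdisjB
    · intro D hD hDdep
      apply hDdep.not_indep
      obtain ⟨e, heC, heD⟩ := exists_of_ssubset hD
      obtain ⟨j, rfl⟩ := heC
      refine Matroid.dual_indep_iff_exists'.mpr ⟨hD.subset.trans hGE,
        insert (g j) B0, base_insert_g hginj hxS hdisj hM hMX hB0 j, ?_⟩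
      rw [Set.disjoint_left]
      intro a haD hmem
      rcases hmem with rfl | h
      · exact heD haD
      · have haS : a ∈ S := (hM.1 ▸ hB0.subset_ground) h
        exact Set.disjoint_left.mp hdisj haS (hD.subset haD)
  refine ⟨⟨Set.range g, Subset.rfl, hcocirc⟩, ?_⟩
  intro k hk hconn hcard
  by_contra hcon
  push_neg at hcon
  set m := k - 1 with hmdef
  have hm1 : 1 ≤ m := by omega
  -- key rank fact: rk(S) + 1 ≤ rk(MX)
  have hrkS : matroidERk MX S + 1 ≤ matroidERank MX := by
    have hne : Nonempty {I : Set α // MX.Indep I ∧ I ⊆ S} :=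
      ⟨⟨∅, MX.empty_indep, empty_subset _⟩⟩
    rw [matroidERk, ENat.iSup_add]
    apply iSup_le
    rintro ⟨I, hI, hIS⟩
    obtain ⟨j⟩ := ‹Nonempty ι›
    have hgI : g j ∉ I := fun h => Set.disjoint_left.mp hdisj (hIS h) ⟨j, rfl⟩
    have hins : MX.Indep (insert (g j) I) :=
      (hMX.2 _).mpr ⟨insert_subset (Or.inr ⟨j, rfl⟩) (hIS.trans subset_union_left),
        indep_insert_g A x hdisj hginj hIS ((hMX.2 I).mp hI).2 j⟩
    calc I.encard + 1 = (insert (g j) I).encard := (encard_insert_of_notMem hgI).symm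
      _ ≤ matroidERk MX MX.E := encard_le_erk hins hins.subset_ground
  have hje : (Set.range g).encard = (Fintype.card ι : ℕ∞) := by
    rw [← image_univ, hginj.injOn.encard_image, encard_univ,
      ENat.card_eq_coe_fintype_card]
  have hcard2 : ((2 * m : ℕ) : ℕ∞) ≤ MX.E.encard := by rw [hMX.1]; exact hcard
  have h1 : (Set.range g).encard ≤ (m : ℕ∞) := by
    rw [hje]
    exact_mod_cast (by omega : Fintype.card ι ≤ m)
  have h2 : (m : ℕ∞) ≤ MX.E.encard :=
    le_trans (by exact_mod_cast (by omega : m ≤ 2 * m)) hcard2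
  obtain ⟨Aset, hGA, hAE, hAcard⟩ :=
    Set.exists_superset_subset_encard_eq (hMX.1 ▸ subset_union_right) h1 h2
  have hdiffcard : (m : ℕ∞) ≤ (MX.E \ Aset).encard := by
    have hsum := Set.encard_diff_add_encard_of_subset hAE
    rw [hAcard] at hsum
    have h2m : (m : ℕ∞) + (m : ℕ∞) ≤ (MX.E \ Aset).encard + (m : ℕ∞) := by
      rw [hsum]
      calc ((m : ℕ∞) + m) = ((2 * m : ℕ) : ℕ∞) := by push_cast; ring
        _ ≤ MX.E.encard := hcard2
    exact (WithTop.add_le_add_iff_right (WithTop.natCast_ne_top m)).mp h2m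
  have hBsubS : MX.E \ Aset ⊆ S := by
    rintro a ⟨haE, haA⟩
    rw [hMX.1] at haE
    rcases haE with h | h
    · exact h
    · exact absurd (hGA h) haA
  have e1 : matroidERk MX Aset ≤ (m : ℕ∞) := erk_le_encard.trans_eq hAcard
  have e2 : matroidERk MX (MX.E \ Aset) ≤ matroidERk MX S := erk_mono hBsubS
  have hmsplit : (m : ℕ∞) = ((m - 1 : ℕ) : ℕ∞) + 1 := by
    exact_mod_cast (by omega : m = (m - 1) + 1)
  have hsub : ((m : ℕ∞) - 1) = ((m - 1 : ℕ) : ℕ∞) := by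
    exact_mod_cast (ENat.coe_sub m 1).symm
  refine hconn Aset (MX.E \ Aset) ⟨disjoint_sdiff_right, union_diff_cancel hAE,
    hAcard.symm.le, hdiffcard, ?_⟩
  calc matroidERk MX Aset + matroidERk MX (MX.E \ Aset)
      ≤ (m : ℕ∞) + matroidERk MX S := add_le_add e1 e2
    _ = ((m - 1 : ℕ) : ℕ∞) + (matroidERk MX S + 1) := by
        rw [hmsplit, add_assoc, add_comm 1 (matroidERk MX S)]
    _ ≤ ((m - 1 : ℕ) : ℕ∞) + matroidERank MX := add_le_add_right hrkS _
    _ = matroidERank MX + ((m : ℕ∞) - 1) := by rw [add_comm, hsub]
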